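/- Let U be a vertex Lie algebra over ℂ. The bilinear map B on M(U) determined by B(uₙ, v_p) = Σ_{i≥0} binom(n,i)·(u_iv)_{n+p−i} for u,v ∈ U and n,p ∈ ℤ satisfies B(K(U), M(U)) ⊆ K(U) and B(M(U), K(U)) ⊆ K(U), hence descends to the quotient L(U) = M(U)/K(U); the induced bracket [uₙ, v_p] = Σ_{i≥0} binom(n,i)·(u_iv)_{n+p−i} makes L(U) a Lie algebra. Moreover (Du)ₙ = −n·u_{n−1} holds in L(U), and the map D : L(U) → L(U) determined by uₙ ↦ (Du)ₙ is a well-defined derivation of this Lie algebra. -/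

import Mathlib

open scoped BigOperators

noncomputable section

/-- A vertex Lie algebra over `ℂ`. -/
structure VertexLie (U : Type*) [AddCommGroup U] [Module ℂ U] where
  D : U →ₗ[ℂ] U
  mul : ℕ → U →ₗ[ℂ] U →ₗ[ℂ] U
  trunc : ∀ u v : U, ∃ N : ℕ, ∀ n : ℕ, N ≤ n → mul n u v = 0
  dLeft : ∀ (n : ℕ) (u v : U), mul (n + 1) (D u) v = (-((n : ℂ) + 1)) • mul n u v
  dLeftZero : ∀ u v : U, mul 0 (D u) v = 0
  leibniz : ∀ (n : ℕ) (u v : U), D (mul n u v) = mul n (D u) v + mul n u (D v)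
  skew : ∀ (n : ℕ) (u v : U),
    mul n u v =
      -∑ᶠ k : ℕ, (((-1 : ℂ) ^ (n + k)) / (Nat.factorial k : ℂ)) • ((D ^ k) (mul (n + k) v u))
  jacobi : ∀ (k m n : ℕ) (u v w : U),
    ∑ᶠ i : ℕ, ((-1 : ℂ) ^ i * (Nat.choose k i : ℂ)) •
        (mul (m + k - i) u (mul (n + i) v w)
          - ((-1 : ℂ) ^ k) • mul (n + k - i) v (mul (m + i) u w))
      = ∑ᶠ i : ℕ, ((Nat.choose m i : ℂ)) • mul (m + n - i) (mul (k + i) u v) w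

/-- The generalized binomial coefficient `binom(n,i) = n(n−1)⋯(n−i+1)/i!` for `n : ℤ`,
viewed in `ℂ`. -/
def zbinom (n : ℤ) (i : ℕ) : ℂ :=
  (∏ j ∈ Finset.range i, ((n : ℂ) - (j : ℂ))) / (Nat.factorial i : ℂ)

variable {U : Type*} [AddCommGroup U] [Module ℂ U]

/-- The subspace `K(U)` of `M(U) = ⊕_{n ∈ ℤ} U`, spanned by the elements
`(Du)ₙ + n·u_{n−1}`. -/
def Ksub (A : VertexLie U) : Submodule ℂ (ℤ →₀ U) :=
  Submodule.span ℂ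
    {x : ℤ →₀ U | ∃ (u : U) (n : ℤ),
      x = Finsupp.single n (A.D u) + (n : ℂ) • Finsupp.single (n - 1) u}

/-- The defining property of the bilinear map `B` on `M(U)`:
`B(uₙ, v_p) = Σ_{i≥0} binom(n,i)·(u_iv)_{n+p−i}`. -/
def BProp (A : VertexLie U)
    (B : (ℤ →₀ U) →ₗ[ℂ] (ℤ →₀ U) →ₗ[ℂ] (ℤ →₀ U)) : Prop :=
  ∀ (n p : ℤ) (u v : U),
    B (Finsupp.single n u) (Finsupp.single p v)
      = ∑ᶠ i : ℕ, zbinom n i • Finsupp.single (n + p - (i : ℤ)) (A.mul i u v)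

-- ====== zbinom toolkit ======
lemma zbinom_zero (n : ℤ) : zbinom n 0 = 1 := by simp [zbinom]

lemma fact_ne (k : ℕ) : (Nat.factorial k : ℂ) ≠ 0 :=
  Nat.cast_ne_zero.2 (Nat.factorial_ne_zero k)

lemma zbinom_succ (n : ℤ) (k : ℕ) :
    ((k:ℂ)+1) * zbinom n (k+1) = ((n:ℂ) - k) * zbinom n k := by
  simp only [zbinom, Finset.prod_range_succ, Nat.factorial_succ]
  have h1 := fact_ne k
  have h2 : ((k:ℂ)+1) ≠ 0 := by
    have := Nat.cast_ne_zero (R := ℂ).2 (Nat.succ_ne_zero k)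
    push_cast at this; exact this
  field_simp
  push_cast; ring

lemma zbinom_sub_one (n : ℤ) (k : ℕ) :
    ((n:ℂ)) * zbinom (n-1) k = ((n:ℂ) - k) * zbinom n k := by
  simp only [zbinom]
  have key : (n:ℂ) * ∏ j ∈ Finset.range k, (((n-1:ℤ):ℂ) - j)
      = ((n:ℂ) - k) * ∏ j ∈ Finset.range k, ((n:ℂ) - j) := by
    have h1 := Finset.prod_range_succ' (fun j => ((n:ℂ) - j)) k
    have h2 := Finset.prod_range_succ (fun j => ((n:ℂ) - j)) k
    push_cast at h1 h2 ⊢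
    rw [h2] at h1
    -- h1 : ∏_{range k}(n-j) * (n-k) = (∏_{range k}(n-(j+1))) * (n-0)
    calc (n:ℂ) * ∏ j ∈ Finset.range k, ((n:ℂ) - 1 - j)
        = (∏ j ∈ Finset.range k, ((n:ℂ) - (j+1))) * ((n:ℂ) - 0) := by
          rw [mul_comm]; congr 1 <;> [skip; ring]
          exact Finset.prod_congr rfl (fun j _ => by ring)
      _ = (∏ j ∈ Finset.range k, ((n:ℂ) - j)) * ((n:ℂ) - k) := h1.symm
      _ = ((n:ℂ) - k) * ∏ j ∈ Finset.range k, ((n:ℂ) - j) := mul_comm _ _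
  rw [mul_div_assoc', mul_div_assoc', key]

lemma zbinom_pascal (n : ℤ) (k : ℕ) :
    zbinom (n+1) (k+1) = zbinom n (k+1) + zbinom n k := by
  simp only [zbinom]
  have h1 : ∏ j ∈ Finset.range (k+1), (((n+1:ℤ):ℂ) - j)
      = ((n:ℂ)+1) * ∏ j ∈ Finset.range k, ((n:ℂ) - j) := by
    have e : ∀ j ∈ Finset.range k, (((n+1:ℤ):ℂ) - ((j+1:ℕ):ℂ)) = ((n:ℂ) - j) := by
      intro j _; push_cast; ring
    rw [Finset.prod_range_succ' (fun j => (((n+1:ℤ):ℂ) - j)) k, Finset.prod_congr rfl e]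
    push_cast; ring
  have h2 : ∏ j ∈ Finset.range (k+1), ((n:ℂ) - j)
      = (∏ j ∈ Finset.range k, ((n:ℂ) - j)) * ((n:ℂ) - k) := by
    simpa using Finset.prod_range_succ (fun j => ((n:ℂ) - j)) k
  rw [h1, h2]
  have hk := fact_ne k
  have hk1 := fact_ne (k+1)
  rw [div_add_div _ _ hk1 hk, div_eq_div_iff hk1 (mul_ne_zero hk1 hk)]
  have hfs : (Nat.factorial (k+1) : ℂ) = ((k:ℂ)+1) * (Nat.factorial k : ℂ) := by
    rw [Nat.factorial_succ]; push_cast; ring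
  rw [hfs]
  ring

lemma zbinom_zero_left (k : ℕ) : zbinom 0 k = if k = 0 then 1 else 0 := by
  cases k with
  | zero => simp [zbinom]
  | succ k =>
    simp only [Nat.succ_ne_zero, if_false, zbinom]
    rw [Finset.prod_eq_zero (Finset.mem_range.2 (Nat.succ_pos k))]
    · simp
    · simp

/-- partial Vandermonde sum -/
def zS (a b : ℤ) (m : ℕ) : ℂ := ∑ j ∈ Finset.range (m+1), zbinom a j * zbinom b (m-j)

lemma zS_split (a b : ℤ) (m : ℕ) : zS a b (m+1) = zS a (b-1) (m+1) + zS a (b-1) m := by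
  have pas : ∀ t : ℕ, zbinom b (t+1) = zbinom (b-1) (t+1) + zbinom (b-1) t := by
    intro t
    have := zbinom_pascal (b-1) t
    simpa using this
  simp only [zS]
  rw [Finset.sum_range_succ (fun j => zbinom a j * zbinom b (m+1-j)) (m+1),
      Finset.sum_range_succ (fun j => zbinom a j * zbinom (b-1) (m+1-j)) (m+1)]
  have e1 : ∀ j ∈ Finset.range (m+1),
      zbinom a j * zbinom b (m+1-j)
        = zbinom a j * zbinom (b-1) (m+1-j) + zbinom a j * zbinom (b-1) (m-j) := by
    intro j hj
    have hj' : j ≤ m := Nat.lt_succ_iff.1 (Finset.mem_range.1 hj)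
    have : m + 1 - j = (m - j) + 1 := by omega
    rw [this, pas (m-j)]
    ring
  rw [Finset.sum_congr rfl e1, Finset.sum_add_distrib]
  simp only [Nat.sub_self, zbinom_zero]
  ring

lemma zS_eq (b : ℤ) : ∀ (m : ℕ) (a : ℤ), zS a b m = zbinom (a+b) m := by
  induction b using Int.induction_on with
  | zero =>
    intro m a
    simp only [zS]
    rw [Finset.sum_eq_single m]
    · simp [Nat.sub_self, zbinom_zero_left, zbinom_zero]
    · intro j hj hjm
      have : j < m + 1 := Finset.mem_range.1 hj
      have h2 : m - j ≠ 0 := by omega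
      simp [zbinom_zero_left, h2]
    · intro h; exact absurd (Finset.self_mem_range_succ m) h
  | succ c ih =>
    intro m a
    induction m with
    | zero => simp [zS, zbinom_zero]
    | succ m ihm =>
      have hs := zS_split a (c+1) m
      simp only [add_sub_cancel_right] at hs
      rw [hs, ih m a, ih (m+1) a]
      have := zbinom_pascal (a+c) m
      rw [show (a:ℤ) + ((c:ℤ)+1) = (a + c) + 1 by ring, this]
      try ring
  | pred c ih =>
    intro m a
    induction m with
    | zero => simp [zS, zbinom_zero]
    | succ m ihm =>
      have hs := zS_split a (-c) m
      rw [show (-(c:ℤ) - 1) = -((c:ℤ)+1) from by ring] at ihm ⊢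
      rw [show (-(c:ℤ)) - 1 = -((c:ℤ)+1) from by ring] at hs
      have h1 : zS a (-((c:ℤ)+1)) (m+1) = zS a (-(c:ℤ)) (m+1) - zS a (-((c:ℤ)+1)) m := by
        rw [hs]; ring
      rw [h1, ihm, ih (m+1) a]
      have hp := zbinom_pascal (a + -((c:ℤ)+1)) m
      rw [show (a:ℤ) + -(c:ℤ) = (a + -((c:ℤ)+1)) + 1 by ring, hp]
      ring

lemma zbinom_vandermonde (a b : ℤ) (m : ℕ) :
    ∑ j ∈ Finset.range (m+1), zbinom a j * zbinom b (m-j) = zbinom (a+b) m :=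
  zS_eq b m a

lemma prod_reflect (x : ℂ) (k : ℕ) :
    ∏ j ∈ Finset.range k, (x - j) = (-1:ℂ)^k * ∏ j ∈ Finset.range k, (((k:ℂ) - 1 - x) - j) := by
  induction k generalizing x with
  | zero => simp
  | succ k ih =>
    rw [Finset.prod_range_succ, ih x,
        Finset.prod_range_succ' (fun j => ((((k+1:ℕ):ℂ) - 1 - x) - j)) k]
    have e : ∀ j ∈ Finset.range k, ((((k+1:ℕ):ℂ) - 1 - x) - ((j+1:ℕ):ℂ)) = (((k:ℂ) - 1 - x) - j) := by
      intro j _; push_cast; ring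
    rw [Finset.prod_congr rfl e]
    push_cast
    ring

lemma zbinom_neg (n : ℤ) (k : ℕ) : zbinom n k = (-1:ℂ)^k * zbinom ((k:ℤ) - n - 1) k := by
  simp only [zbinom]
  rw [prod_reflect (n:ℂ) k]
  have e : ∀ j ∈ Finset.range k, (((k:ℂ) - 1 - (n:ℂ)) - j) = ((((k:ℤ) - n - 1 : ℤ):ℂ) - j) := by
    intro j _; push_cast; ring
  rw [Finset.prod_congr rfl e, mul_div_assoc]

lemma zbinom_skew_id (n p : ℤ) (m : ℕ) :
    ∑ i ∈ Finset.range (m+1), (-1:ℂ)^i * zbinom n i * zbinom (n+p-(i:ℤ)) (m-i) = zbinom p m := by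
  have e : ∀ i ∈ Finset.range (m+1),
      (-1:ℂ)^i * zbinom n i * zbinom (n+p-(i:ℤ)) (m-i)
        = (-1:ℂ)^m * (zbinom n i * zbinom ((m:ℤ)-n-p-1) (m-i)) := by
    intro i hi
    have him : i ≤ m := Nat.lt_succ_iff.1 (Finset.mem_range.1 hi)
    rw [zbinom_neg (n+p-(i:ℤ)) (m-i)]
    have e2 : ((m-i:ℕ):ℤ) - (n+p-(i:ℤ)) - 1 = (m:ℤ) - n - p - 1 := by
      rw [Int.ofNat_sub him]; ring
    rw [e2]
    have e3 : (-1:ℂ)^i * (-1:ℂ)^(m-i) = (-1:ℂ)^m := by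
      rw [← pow_add]; congr 1; omega
    calc (-1:ℂ)^i * zbinom n i * ((-1:ℂ)^(m-i) * zbinom ((m:ℤ)-n-p-1) (m-i))
        = ((-1:ℂ)^i * (-1:ℂ)^(m-i)) * (zbinom n i * zbinom ((m:ℤ)-n-p-1) (m-i)) := by ring
      _ = (-1:ℂ)^m * (zbinom n i * zbinom ((m:ℤ)-n-p-1) (m-i)) := by rw [e3]
  rw [Finset.sum_congr rfl e, ← Finset.mul_sum, zbinom_vandermonde n ((m:ℤ)-n-p-1) m]
  rw [show (n:ℤ) + ((m:ℤ)-n-p-1) = (m:ℤ) - p - 1 by ring]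
  rw [zbinom_neg p m]

lemma zbinom_subset (a : ℤ) (s d : ℕ) :
    zbinom a (s+d) * (Nat.choose (s+d) s : ℂ) = zbinom a s * zbinom (a - (s:ℤ)) d := by
  simp only [zbinom]
  rw [Nat.cast_choose ℂ (Nat.le_add_right s d)]
  have e : (s + d) - s = d := by omega
  rw [e, Finset.prod_range_add (fun j => ((a:ℂ) - j)) s d]
  have e2 : ∀ j ∈ Finset.range d, ((a:ℂ) - ((s+j:ℕ):ℂ)) = (((a - (s:ℤ) : ℤ):ℂ) - j) := by
    intro j _; push_cast; ring
  rw [Finset.prod_congr rfl e2]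
  have h1 := fact_ne s
  have h2 := fact_ne d
  have h3 := fact_ne (s+d)
  field_simp
  try ring

-- ====== auxiliary development ======

lemma finsum_range {V : Type*} [AddCommMonoid V] {f : ℕ → V} {N : ℕ}
    (h : ∀ i, N ≤ i → f i = 0) : ∑ᶠ i, f i = ∑ i ∈ Finset.range N, f i := by
  apply finsum_eq_sum_of_support_subset
  intro i hi
  simp only [Finset.coe_range, Set.mem_Iio]
  by_contra hc
  exact hi (h i (le_of_not_gt hc))

variable (A : VertexLie U)

/-- a bound for truncation -/
def bnd (u v : U) : ℕ := (A.trunc u v).choose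

lemma bnd_spec (u v : U) : ∀ {n : ℕ}, bnd A u v ≤ n → A.mul n u v = 0 :=
  fun {n} h => (A.trunc u v).choose_spec n h

/-- the building block `Σ_i binom(n,i) (u_i v)_{n+p-i}` as a finite sum -/
def fsum (n p : ℤ) (N : ℕ) (u v : U) : ℤ →₀ U :=
  ∑ i ∈ Finset.range N, zbinom n i • Finsupp.single (n + p - (i : ℤ)) (A.mul i u v)

lemma fsum_eq (n p : ℤ) (u v : U) {N N' : ℕ} (hN : ∀ i, N ≤ i → A.mul i u v = 0)
    (hN' : ∀ i, N' ≤ i → A.mul i u v = 0) :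
    fsum A n p N u v = fsum A n p N' u v := by
  rcases le_total N N' with h | h
  · exact Finset.sum_subset (Finset.range_subset_range.2 h) (fun i _ hi => by
      rw [hN i (le_of_not_gt (fun hlt => hi (Finset.mem_range.2 hlt)))]; simp)
  · exact (Finset.sum_subset (Finset.range_subset_range.2 h) (fun i _ hi => by
      rw [hN' i (le_of_not_gt (fun hlt => hi (Finset.mem_range.2 hlt)))]; simp)).symm

lemma finsum_eq_fsum (n p : ℤ) (u v : U) {N : ℕ} (hN : ∀ i, N ≤ i → A.mul i u v = 0) :
    ∑ᶠ i : ℕ, zbinom n i • Finsupp.single (n + p - (i : ℤ)) (A.mul i u v)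
      = fsum A n p N u v := by
  apply finsum_range
  intro i hi
  rw [hN i hi]; simp

def Fmap (n p : ℤ) : U →ₗ[ℂ] U →ₗ[ℂ] (ℤ →₀ U) :=
  LinearMap.mk₂ ℂ
    (fun u v => ∑ᶠ i : ℕ, zbinom n i • Finsupp.single (n + p - (i : ℤ)) (A.mul i u v))
    (fun u₁ u₂ v => by
      set N := max (bnd A u₁ v) (bnd A u₂ v) with hNdef
      have h1 : ∀ i, N ≤ i → A.mul i u₁ v = 0 :=
        fun i hi => bnd_spec A u₁ v (le_trans (le_max_left _ _) hi)
      have h2 : ∀ i, N ≤ i → A.mul i u₂ v = 0 :=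
        fun i hi => bnd_spec A u₂ v (le_trans (le_max_right _ _) hi)
      have h12 : ∀ i, N ≤ i → A.mul i (u₁ + u₂) v = 0 := fun i hi => by
        rw [map_add, LinearMap.add_apply, h1 i hi, h2 i hi, add_zero]
      rw [finsum_eq_fsum A n p _ v h12, finsum_eq_fsum A n p u₁ v h1,
          finsum_eq_fsum A n p u₂ v h2, fsum, fsum, fsum, ← Finset.sum_add_distrib]
      exact Finset.sum_congr rfl (fun i _ => by
        rw [map_add, LinearMap.add_apply, Finsupp.single_add, smul_add]))
    (fun c u v => by
      have h1 : ∀ i, bnd A u v ≤ i → A.mul i u v = 0 := fun i hi => bnd_spec A u v hi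
      have h2 : ∀ i, bnd A u v ≤ i → A.mul i (c • u) v = 0 := fun i hi => by
        rw [map_smul, LinearMap.smul_apply, h1 i hi, smul_zero]
      rw [finsum_eq_fsum A n p _ v h2, finsum_eq_fsum A n p u v h1,
          fsum, fsum, Finset.smul_sum]
      exact Finset.sum_congr rfl (fun i _ => by
        rw [map_smul, LinearMap.smul_apply, smul_comm, ← Finsupp.smul_single]))
    (fun u v₁ v₂ => by
      set N := max (bnd A u v₁) (bnd A u v₂) with hNdef
      have h1 : ∀ i, N ≤ i → A.mul i u v₁ = 0 :=
        fun i hi => bnd_spec A u v₁ (le_trans (le_max_left _ _) hi)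
      have h2 : ∀ i, N ≤ i → A.mul i u v₂ = 0 :=
        fun i hi => bnd_spec A u v₂ (le_trans (le_max_right _ _) hi)
      have h12 : ∀ i, N ≤ i → A.mul i u (v₁ + v₂) = 0 := fun i hi => by
        rw [map_add, h1 i hi, h2 i hi, add_zero]
      rw [finsum_eq_fsum A n p u _ h12, finsum_eq_fsum A n p u v₁ h1,
          finsum_eq_fsum A n p u v₂ h2, fsum, fsum, fsum, ← Finset.sum_add_distrib]
      exact Finset.sum_congr rfl (fun i _ => by
        rw [map_add, Finsupp.single_add, smul_add]))
    (fun c u v => by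
      have h1 : ∀ i, bnd A u v ≤ i → A.mul i u v = 0 := fun i hi => bnd_spec A u v hi
      have h2 : ∀ i, bnd A u v ≤ i → A.mul i u (c • v) = 0 := fun i hi => by
        rw [map_smul, h1 i hi, smul_zero]
      rw [finsum_eq_fsum A n p u _ h2, finsum_eq_fsum A n p u v h1,
          fsum, fsum, Finset.smul_sum]
      exact Finset.sum_congr rfl (fun i _ => by
        rw [map_smul, smul_comm, ← Finsupp.smul_single]))

def Bmap : (ℤ →₀ U) →ₗ[ℂ] (ℤ →₀ U) →ₗ[ℂ] (ℤ →₀ U) :=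
  Finsupp.lsum ℂ (fun n =>
    (Finsupp.lsum ℂ (R := ℂ) :
        (ℤ → U →ₗ[ℂ] (ℤ →₀ U)) ≃ₗ[ℂ] ((ℤ →₀ U) →ₗ[ℂ] (ℤ →₀ U))).toLinearMap.comp
      (LinearMap.pi (fun p => Fmap A n p)))

lemma Bmap_prop : BProp A (Bmap A) := by
  intro n p u v
  rw [Bmap, Finsupp.lsum_single]
  simp only [LinearMap.coe_comp, Function.comp_apply, LinearEquiv.coe_coe]
  rw [Finsupp.lsum_single]
  rfl

-- ===== zbinom facts are in zb.lean; assume imported (we'll merge) =====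

lemma mk_gen (u : U) (n : ℤ) :
    (Ksub A).mkQ (Finsupp.single n (A.D u))
      = (-(n:ℂ)) • (Ksub A).mkQ (Finsupp.single (n-1) u) := by
  have hmem : Finsupp.single n (A.D u) + (n : ℂ) • Finsupp.single (n - 1) u ∈ Ksub A :=
    Submodule.subset_span ⟨u, n, rfl⟩
  have h0 : (Ksub A).mkQ (Finsupp.single n (A.D u) + (n : ℂ) • Finsupp.single (n - 1) u) = 0 := by
    rw [Submodule.mkQ_apply, Submodule.Quotient.mk_eq_zero]; exact hmem
  rw [map_add, map_smul] at h0
  rw [eq_neg_of_add_eq_zero_left h0, neg_smul]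

lemma mk_Dpow (k : ℕ) (u : U) (n : ℤ) :
    (Ksub A).mkQ (Finsupp.single n ((A.D ^ k) u))
      = ((-1:ℂ)^k * ∏ j ∈ Finset.range k, ((n:ℂ) - j)) •
          (Ksub A).mkQ (Finsupp.single (n - (k:ℤ)) u) := by
  induction k generalizing u n with
  | zero => simp
  | succ k ih =>
    rw [pow_succ, Module.End.mul_apply, ih (A.D u) n, mk_gen A u (n - (k:ℤ))]
    rw [smul_smul, show n - (k:ℤ) - 1 = n - ((k:ℕ)+1:ℤ) by ring]
    rw [Finset.prod_range_succ]
    congr 1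
    push_cast
    ring

lemma Bsingle {B : (ℤ →₀ U) →ₗ[ℂ] (ℤ →₀ U) →ₗ[ℂ] (ℤ →₀ U)} (hB : BProp A B)
    (n p : ℤ) (u v : U) {N : ℕ} (hN : ∀ i, N ≤ i → A.mul i u v = 0) :
    B (Finsupp.single n u) (Finsupp.single p v) = fsum A n p N u v := by
  rw [hB n p u v]; exact finsum_eq_fsum A n p u v hN

lemma L1 {B : (ℤ →₀ U) →ₗ[ℂ] (ℤ →₀ U) →ₗ[ℂ] (ℤ →₀ U)} (hB : BProp A B)
    (n p : ℤ) (u v : U) :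
    B (Finsupp.single n (A.D u) + (n:ℂ) • Finsupp.single (n-1) u) (Finsupp.single p v) = 0 := by
  set N := bnd A u v with hNdef
  have huv : ∀ i, N ≤ i → A.mul i u v = 0 := fun i hi => bnd_spec A u v hi
  have hDu : ∀ i, N + 1 ≤ i → A.mul i (A.D u) v = 0 := by
    intro i hi
    obtain ⟨j, rfl⟩ : ∃ j, i = j + 1 := ⟨i - 1, by omega⟩
    rw [A.dLeft j u v, huv j (by omega), smul_zero]
  rw [map_add, map_smul, LinearMap.add_apply, LinearMap.smul_apply,
      Bsingle A hB n p (A.D u) v hDu, Bsingle A hB (n-1) p u v huv,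
      fsum, fsum, Finset.sum_range_succ' _ N, A.dLeftZero u v]
  simp only [Finsupp.single_zero, smul_zero, add_zero]
  rw [Finset.smul_sum, ← Finset.sum_add_distrib]
  apply Finset.sum_eq_zero
  intro j hj
  rw [A.dLeft j u v, ← Finsupp.smul_single,
      show n + p - (((j+1:ℕ)):ℤ) = (n-1) + p - (j:ℤ) by push_cast; ring,
      smul_smul, smul_smul, ← add_smul]
  have h1 := zbinom_succ n j
  have h2 := zbinom_sub_one n j
  have hc : zbinom n (j+1) * (-((j:ℂ)+1)) + (n:ℂ) * zbinom (n-1) j = 0 := by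
    linear_combination h2 - h1
  rw [hc, zero_smul]

lemma L2 {B : (ℤ →₀ U) →ₗ[ℂ] (ℤ →₀ U) →ₗ[ℂ] (ℤ →₀ U)} (hB : BProp A B)
    (n p : ℤ) (u v : U) :
    (Ksub A).mkQ (B (Finsupp.single n u)
      (Finsupp.single p (A.D v) + (p:ℂ) • Finsupp.single (p-1) v)) = 0 := by
  set π := (Ksub A).mkQ with hπ
  set N := bnd A u v with hNdef
  have huv : ∀ i, N ≤ i → A.mul i u v = 0 := fun i hi => bnd_spec A u v hi
  have huv' : ∀ i, N + 1 ≤ i → A.mul i u v = 0 := fun i hi => huv i (by omega)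
  have hDu : ∀ i, N + 1 ≤ i → A.mul i (A.D u) v = 0 := by
    intro i hi
    obtain ⟨j, rfl⟩ : ∃ j, i = j + 1 := ⟨i - 1, by omega⟩
    rw [A.dLeft j u v, huv j (by omega), smul_zero]
  have hDv : ∀ i, N + 1 ≤ i → A.mul i u (A.D v) = 0 := by
    intro i hi
    have h1 : A.mul i u (A.D v) = A.D (A.mul i u v) - A.mul i (A.D u) v := by
      rw [A.leibniz i u v]; abel
    rw [h1, huv' i hi, hDu i hi, map_zero, sub_zero]
  rw [map_add, map_smul, Bsingle A hB n p u (A.D v) hDv, Bsingle A hB n (p-1) u v huv',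
      map_add, map_smul, fsum, fsum, map_sum, map_sum, Finset.smul_sum]
  have key1 : ∀ i ∈ Finset.range (N+1),
      π (zbinom n i • Finsupp.single (n + p - (i:ℤ)) (A.mul i u (A.D v)))
        = (zbinom n i * (-((n+p-(i:ℤ) : ℤ):ℂ))) • π (Finsupp.single (n+p-1-(i:ℤ)) (A.mul i u v))
          - zbinom n i • π (Finsupp.single (n + p - (i:ℤ)) (A.mul i (A.D u) v)) := by
    intro i _
    have h1 : A.mul i u (A.D v) = A.D (A.mul i u v) - A.mul i (A.D u) v := by
      rw [A.leibniz i u v]; abel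
    rw [map_smul, h1, Finsupp.single_sub, map_sub, hπ, mk_gen A (A.mul i u v) (n+p-(i:ℤ)),
        show n + p - (i:ℤ) - 1 = n+p-1-(i:ℤ) by ring, smul_sub, smul_smul]
  rw [Finset.sum_congr rfl key1, Finset.sum_sub_distrib]
  have key3 : ∀ i ∈ Finset.range (N+1),
      (p:ℂ) • π (zbinom n i • Finsupp.single (n + (p-1) - (i:ℤ)) (A.mul i u v))
        = ((p:ℂ) * zbinom n i) • π (Finsupp.single (n+p-1-(i:ℤ)) (A.mul i u v)) := by
    intro i _
    rw [map_smul, smul_smul, show n + (p-1) - (i:ℤ) = n+p-1-(i:ℤ) by ring]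
  rw [Finset.sum_congr rfl key3]
  have keyB : ∑ i ∈ Finset.range (N+1),
      zbinom n i • π (Finsupp.single (n + p - (i:ℤ)) (A.mul i (A.D u) v))
        = ∑ i ∈ Finset.range (N+1),
            (zbinom n (i+1) * (-((i:ℂ)+1))) • π (Finsupp.single (n+p-1-(i:ℤ)) (A.mul i u v)) := by
    rw [Finset.sum_range_succ' (fun i => zbinom n i •
          π (Finsupp.single (n + p - (i:ℤ)) (A.mul i (A.D u) v))) N]
    rw [A.dLeftZero u v]
    simp only [Finsupp.single_zero, map_zero, smul_zero, add_zero]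
    rw [Finset.sum_range_succ (fun i => (zbinom n (i+1) * (-((i:ℂ)+1))) •
          π (Finsupp.single (n+p-1-(i:ℤ)) (A.mul i u v))) N]
    rw [huv N (le_refl N)]
    simp only [Finsupp.single_zero, map_zero, smul_zero, add_zero]
    apply Finset.sum_congr rfl
    intro j _
    rw [A.dLeft j u v, ← Finsupp.smul_single, map_smul, smul_smul,
        show n + p - ((j+1:ℕ):ℤ) = n+p-1-(j:ℤ) by push_cast; ring]
  rw [keyB, ← Finset.sum_sub_distrib, ← Finset.sum_add_distrib]
  apply Finset.sum_eq_zero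
  intro i _
  rw [← sub_smul, ← add_smul]
  have h1 := zbinom_succ n i
  have hc : zbinom n i * (-((n+p-(i:ℤ) : ℤ):ℂ)) - zbinom n (i+1) * (-((i:ℂ)+1))
      + (p:ℂ) * zbinom n i = 0 := by
    push_cast
    linear_combination h1
  rw [hc, zero_smul]

lemma diag_regroup {V : Type*} [AddCommGroup V] [Module ℂ V] (c : ℕ → ℕ → ℂ) (H : ℕ → V)
    (R : ℕ) (hH : ∀ m, R ≤ m → H m = 0) :
    ∑ i ∈ Finset.range R, ∑ k ∈ Finset.range R, c i k • H (i+k)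
      = ∑ m ∈ Finset.range (2*R), (∑ i ∈ Finset.range (m+1), c i (m-i)) • H m := by
  have hinner : ∀ i ∈ Finset.range R, ∑ k ∈ Finset.range R, c i k • H (i+k)
      = ∑ k ∈ Finset.range (2*R - i), c i k • H (i+k) := by
    intro i hi
    refine Finset.sum_subset (Finset.range_subset_range.2 ?_) (fun k _ hk => ?_)
    · have := Finset.mem_range.1 hi; omega
    · have : R ≤ k := le_of_not_gt (fun h => hk (Finset.mem_range.2 h))
      rw [hH (i+k) (by omega), smul_zero]
  have houter : ∑ i ∈ Finset.range R, (∑ k ∈ Finset.range (2*R - i), c i k • H (i+k))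
      = ∑ i ∈ Finset.range (2*R), (∑ k ∈ Finset.range (2*R - i), c i k • H (i+k)) := by
    refine Finset.sum_subset (Finset.range_subset_range.2 (by omega)) (fun i _ hi => ?_)
    refine Finset.sum_eq_zero (fun k _ => ?_)
    have : R ≤ i := le_of_not_gt (fun h => hi (Finset.mem_range.2 h))
    rw [hH (i+k) (by omega), smul_zero]
  rw [Finset.sum_congr rfl hinner, houter,
      ← Finset.sum_range_diag_flip (2*R) (fun i k => c i k • H (i+k))]
  refine Finset.sum_congr rfl (fun m _ => ?_)
  rw [Finset.sum_smul]
  refine Finset.sum_congr rfl (fun i hi => ?_)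
  rw [Nat.add_sub_cancel' (Nat.lt_succ_iff.1 (Finset.mem_range.1 hi))]

lemma L3 {B : (ℤ →₀ U) →ₗ[ℂ] (ℤ →₀ U) →ₗ[ℂ] (ℤ →₀ U)} (hB : BProp A B)
    (n p : ℤ) (u v : U) :
    (Ksub A).mkQ (B (Finsupp.single n u) (Finsupp.single p v))
      = - (Ksub A).mkQ (B (Finsupp.single p v) (Finsupp.single n u)) := by
  set π := (Ksub A).mkQ with hπ
  set R := max (bnd A u v) (bnd A v u) with hR
  have huv : ∀ i, R ≤ i → A.mul i u v = 0 :=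
    fun i hi => bnd_spec A u v (le_trans (le_max_left _ _) hi)
  have hvu : ∀ i, R ≤ i → A.mul i v u = 0 :=
    fun i hi => bnd_spec A v u (le_trans (le_max_right _ _) hi)
  have hvu2 : ∀ i, 2*R ≤ i → A.mul i v u = 0 := fun i hi => hvu i (by omega)
  rw [Bsingle A hB n p u v huv, Bsingle A hB p n v u hvu2, fsum, fsum, map_sum, map_sum]
  have powkk : ∀ k : ℕ, (-1:ℂ)^k * (-1:ℂ)^k = 1 := by
    intro k; rw [← pow_add, ← two_mul, pow_mul]; norm_num
  have step1 : ∀ i ∈ Finset.range R,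
      π (zbinom n i • Finsupp.single (n + p - (i:ℤ)) (A.mul i u v))
        = ∑ k ∈ Finset.range R, (-((-1:ℂ)^i * zbinom n i * zbinom (n+p-(i:ℤ)) k)) •
            π (Finsupp.single (n + p - ((i+k:ℕ):ℤ)) (A.mul (i+k) v u)) := by
    intro i _
    have hfin : ∑ᶠ k : ℕ, (((-1:ℂ)^(i+k))/(Nat.factorial k : ℂ)) • ((A.D ^ k) (A.mul (i+k) v u))
        = ∑ k ∈ Finset.range R, (((-1:ℂ)^(i+k))/(Nat.factorial k : ℂ)) •
            ((A.D ^ k) (A.mul (i+k) v u)) := by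
      apply finsum_range
      intro k hk
      rw [hvu (i+k) (by omega), map_zero, smul_zero]
    rw [map_smul, A.skew i u v, hfin, Finsupp.single_neg, Finsupp.single_finset_sum,
        map_neg, map_sum, smul_neg, Finset.smul_sum, ← Finset.sum_neg_distrib]
    refine Finset.sum_congr rfl (fun k _ => ?_)
    rw [← Finsupp.smul_single, map_smul, hπ,
        mk_Dpow A k (A.mul (i+k) v u) (n + p - (i:ℤ)),
        show n + p - (i:ℤ) - (k:ℤ) = n + p - ((i+k:ℕ):ℤ) by push_cast; ring,
        smul_smul, smul_smul, neg_smul]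
    congr 1
    congr 1
    have hz : zbinom (n+p-(i:ℤ)) k
        = (∏ j ∈ Finset.range k, (((n + p - (i:ℤ) : ℤ):ℂ) - (j:ℂ))) / (Nat.factorial k : ℂ) := rfl
    rw [hz, pow_add]
    have hfk := fact_ne k
    push_cast
    field_simp
    linear_combination (zbinom n i *
        ∏ j ∈ Finset.range k, ((n:ℂ) + (p:ℂ) - (i:ℂ) - (j:ℂ))) * powkk k
  rw [Finset.sum_congr rfl step1]
  have hH : ∀ m, R ≤ m → π (Finsupp.single (n + p - (m:ℤ)) (A.mul m v u)) = 0 := by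
    intro m hm
    rw [hvu m hm, Finsupp.single_zero, map_zero]
  rw [diag_regroup (fun i k => -((-1:ℂ)^i * zbinom n i * zbinom (n+p-(i:ℤ)) k))
      (fun m => π (Finsupp.single (n + p - (m:ℤ)) (A.mul m v u))) R hH]
  rw [← Finset.sum_neg_distrib]
  refine Finset.sum_congr rfl (fun m _ => ?_)
  rw [map_smul, ← neg_smul, show p + n - (m:ℤ) = n + p - (m:ℤ) by ring]
  congr 1
  rw [← zbinom_skew_id n p m, ← Finset.sum_neg_distrib]

lemma jacobi0 (i j : ℕ) (u v w : U) {S : ℕ} (hS : i < S) :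
    A.mul i u (A.mul j v w) - A.mul j v (A.mul i u w)
      = ∑ s ∈ Finset.range S, ((Nat.choose i s : ℂ)) • A.mul (i+j-s) (A.mul s u v) w := by
  have h := A.jacobi 0 i j u v w
  have hl : ∑ᶠ i' : ℕ, ((-1:ℂ)^i' * (Nat.choose 0 i' : ℂ)) •
      (A.mul (i + 0 - i') u (A.mul (j + i') v w)
        - ((-1:ℂ)^0) • A.mul (j + 0 - i') v (A.mul (i + i') u w))
      = A.mul i u (A.mul j v w) - A.mul j v (A.mul i u w) := by
    rw [finsum_eq_single _ 0 (fun x hx => ?_)]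
    · simp
    · rw [Nat.choose_eq_zero_of_lt (Nat.pos_of_ne_zero hx)]
      simp
  have hr : ∑ᶠ s : ℕ, ((Nat.choose i s : ℂ)) • A.mul (i + j - s) (A.mul (0 + s) u v) w
      = ∑ s ∈ Finset.range S, ((Nat.choose i s : ℂ)) • A.mul (i+j-s) (A.mul s u v) w := by
    rw [finsum_range (N := S) (fun s hs => by
      rw [Nat.choose_eq_zero_of_lt (by omega), Nat.cast_zero, zero_smul])]
    exact Finset.sum_congr rfl (fun s _ => by rw [zero_add])
  rw [← hl, h, hr]

lemma L4 {B : (ℤ →₀ U) →ₗ[ℂ] (ℤ →₀ U) →ₗ[ℂ] (ℤ →₀ U)} (hB : BProp A B)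
    (a b c : ℤ) (u v w : U) :
    B (Finsupp.single a u) (B (Finsupp.single b v) (Finsupp.single c w))
      - B (Finsupp.single b v) (B (Finsupp.single a u) (Finsupp.single c w))
      = B (B (Finsupp.single a u) (Finsupp.single b v)) (Finsupp.single c w) := by
  classical
  set R1 := max (bnd A v w) (max (bnd A u w) (bnd A u v)) with hR1
  set R2 := (Finset.range R1).sup (fun j => bnd A u (A.mul j v w)) with hR2
  set R3 := (Finset.range R1).sup (fun i => bnd A v (A.mul i u w)) with hR3
  set R4 := (Finset.range R1).sup (fun s => bnd A (A.mul s u v) w) with hR4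
  set R := max R1 (max R2 (max R3 R4)) with hRdef
  have hR1R : R1 ≤ R := le_max_left _ _
  have hvw : ∀ j, R ≤ j → A.mul j v w = 0 := fun j hj =>
    bnd_spec A v w (le_trans (le_trans (le_max_left _ _) hR1R) hj)
  have huw : ∀ i, R ≤ i → A.mul i u w = 0 := fun i hi =>
    bnd_spec A u w (le_trans (le_trans (le_trans (le_max_left _ _) (le_max_right _ _)) hR1R) hi)
  have huv : ∀ s, R ≤ s → A.mul s u v = 0 := fun s hs =>
    bnd_spec A u v (le_trans (le_trans (le_trans (le_max_right _ _) (le_max_right _ _)) hR1R) hs)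
  have hu_vw : ∀ j i, R ≤ i → A.mul i u (A.mul j v w) = 0 := by
    intro j i hi
    by_cases hj : j < R1
    · refine bnd_spec A u (A.mul j v w) (le_trans (le_trans ?_ hi) le_rfl)
      calc bnd A u (A.mul j v w) ≤ R2 := Finset.le_sup (f := fun j => bnd A u (A.mul j v w)) (Finset.mem_range.2 hj)
        _ ≤ R := le_trans (le_max_left _ _) (le_max_right _ _)
    · rw [bnd_spec A v w (le_trans (le_max_left _ _) (le_of_not_gt hj)), map_zero]
  have hv_uw : ∀ i j, R ≤ j → A.mul j v (A.mul i u w) = 0 := by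
    intro i j hj
    by_cases hi : i < R1
    · refine bnd_spec A v (A.mul i u w) (le_trans ?_ hj)
      calc bnd A v (A.mul i u w) ≤ R3 := Finset.le_sup (f := fun i => bnd A v (A.mul i u w)) (Finset.mem_range.2 hi)
        _ ≤ R := le_trans (le_trans (le_max_left _ _) (le_max_right _ _)) (le_max_right _ _)
    · rw [bnd_spec A u w
          (le_trans (le_trans (le_max_left _ _) (le_max_right _ _)) (le_of_not_gt hi)), map_zero]
  have h_uvw : ∀ s t, R ≤ t → A.mul t (A.mul s u v) w = 0 := by
    intro s t ht
    by_cases hs : s < R1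
    · refine bnd_spec A (A.mul s u v) w (le_trans ?_ ht)
      calc bnd A (A.mul s u v) w ≤ R4 := Finset.le_sup (f := fun s => bnd A (A.mul s u v) w) (Finset.mem_range.2 hs)
        _ ≤ R := le_trans (le_trans (le_max_right _ _) (le_max_right _ _)) (le_max_right _ _)
    · rw [bnd_spec A u v
          (le_trans (le_trans (le_max_right _ _) (le_max_right _ _)) (le_of_not_gt hs)),
          map_zero, LinearMap.zero_apply]
  have hRR : R ≤ 2*R := by omega
  -- RHS
  have hRHS : B (B (Finsupp.single a u) (Finsupp.single b v)) (Finsupp.single c w)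
      = ∑ s ∈ Finset.range R, zbinom a s •
          ∑ m ∈ Finset.range (2*R), zbinom (a+b-(s:ℤ)) m •
            Finsupp.single (a+b+c-(s:ℤ)-(m:ℤ)) (A.mul m (A.mul s u v) w) := by
    rw [Bsingle A hB a b u v huv, fsum, map_sum, LinearMap.sum_apply]
    refine Finset.sum_congr rfl (fun s hs => ?_)
    rw [map_smul, LinearMap.smul_apply,
        Bsingle A hB (a+b-(s:ℤ)) c (A.mul s u v) w (fun t ht => h_uvw s t (le_trans hRR ht)),
        fsum]
    congr 1
    refine Finset.sum_congr rfl (fun m _ => ?_)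
    rw [show a+b-(s:ℤ)+c-(m:ℤ) = a+b+c-(s:ℤ)-(m:ℤ) by ring]
  -- LHS part 1
  have hL1 : B (Finsupp.single a u) (B (Finsupp.single b v) (Finsupp.single c w))
      = ∑ i ∈ Finset.range (2*R), ∑ j ∈ Finset.range R,
          (zbinom a i * zbinom b j) •
            Finsupp.single (a+b+c-(i:ℤ)-(j:ℤ)) (A.mul i u (A.mul j v w)) := by
    rw [Bsingle A hB b c v w hvw, fsum, map_sum, Finset.sum_comm]
    refine Finset.sum_congr rfl (fun j _ => ?_)
    rw [map_smul, Bsingle A hB a (b+c-(j:ℤ)) u (A.mul j v w)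
        (fun i hi => hu_vw j i (le_trans hRR hi)), fsum, Finset.smul_sum]
    refine Finset.sum_congr rfl (fun i _ => ?_)
    rw [smul_smul, mul_comm (zbinom b j) (zbinom a i),
        show a+(b+c-(j:ℤ))-(i:ℤ) = a+b+c-(i:ℤ)-(j:ℤ) by ring]
  -- LHS part 2
  have hL2 : B (Finsupp.single b v) (B (Finsupp.single a u) (Finsupp.single c w))
      = ∑ i ∈ Finset.range (2*R), ∑ j ∈ Finset.range R,
          (zbinom a i * zbinom b j) •
            Finsupp.single (a+b+c-(i:ℤ)-(j:ℤ)) (A.mul j v (A.mul i u w)) := by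
    rw [Bsingle A hB a c u w (fun i hi => huw i (le_trans hRR hi)), fsum, map_sum]
    refine Finset.sum_congr rfl (fun i _ => ?_)
    rw [map_smul, Bsingle A hB b (a+c-(i:ℤ)) v (A.mul i u w)
        (fun j hj => hv_uw i j hj), fsum, Finset.smul_sum]
    refine Finset.sum_congr rfl (fun j _ => ?_)
    rw [smul_smul, show b+(a+c-(i:ℤ))-(j:ℤ) = a+b+c-(i:ℤ)-(j:ℤ) by ring]
  rw [hL1, hL2, hRHS, ← Finset.sum_sub_distrib]
  -- combine to triple sum
  have hL3 : ∀ i ∈ Finset.range (2*R),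
      (∑ j ∈ Finset.range R, (zbinom a i * zbinom b j) •
          Finsupp.single (a+b+c-(i:ℤ)-(j:ℤ)) (A.mul i u (A.mul j v w)))
        - ∑ j ∈ Finset.range R, (zbinom a i * zbinom b j) •
            Finsupp.single (a+b+c-(i:ℤ)-(j:ℤ)) (A.mul j v (A.mul i u w))
      = ∑ s ∈ Finset.range (2*R), ∑ j ∈ Finset.range R,
          (zbinom a i * zbinom b j * (Nat.choose i s : ℂ)) •
            Finsupp.single (a+b+c-(i:ℤ)-(j:ℤ)) (A.mul (i+j-s) (A.mul s u v) w) := by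
    intro i hi
    rw [← Finset.sum_sub_distrib, Finset.sum_comm]
    refine Finset.sum_congr rfl (fun j _ => ?_)
    rw [← smul_sub, ← Finsupp.single_sub,
        jacobi0 A i j u v w (Finset.mem_range.1 hi),
        Finsupp.single_finset_sum, Finset.smul_sum]
    refine Finset.sum_congr rfl (fun s _ => ?_)
    rw [← Finsupp.smul_single, smul_smul, mul_assoc]
  rw [Finset.sum_congr rfl hL3, Finset.sum_comm]
  -- shrink s-range from 2R to R
  rw [← Finset.sum_subset (Finset.range_subset_range.2 hRR) (fun s _ hs => ?hzero)]
  case hzero =>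
    have hsR : R ≤ s := le_of_not_gt (fun h => hs (Finset.mem_range.2 h))
    refine Finset.sum_eq_zero (fun i _ => Finset.sum_eq_zero (fun j _ => ?_))
    rw [huv s hsR, map_zero, LinearMap.zero_apply, Finsupp.single_zero, smul_zero]
  -- now per s < R
  refine Finset.sum_congr rfl (fun s hs => ?_)
  have hsR : s < R := Finset.mem_range.1 hs
  -- split the i-range at s
  have hsplit : ∑ i ∈ Finset.range (2*R), ∑ j ∈ Finset.range R,
      (zbinom a i * zbinom b j * (Nat.choose i s : ℂ)) •
        Finsupp.single (a+b+c-(i:ℤ)-(j:ℤ)) (A.mul (i+j-s) (A.mul s u v) w)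
      = ∑ d ∈ Finset.range (2*R - s), ∑ j ∈ Finset.range R,
          (zbinom a (s+d) * zbinom b j * (Nat.choose (s+d) s : ℂ)) •
            Finsupp.single (a+b+c-((s+d:ℕ):ℤ)-(j:ℤ)) (A.mul (s+d+j-s) (A.mul s u v) w) := by
    rw [show 2*R = s + (2*R - s) by omega, Finset.sum_range_add,
        show s + (2*R - s) - s = 2*R - s by omega]
    have hz : ∑ i ∈ Finset.range s, ∑ j ∈ Finset.range R,
        (zbinom a i * zbinom b j * (Nat.choose i s : ℂ)) •
          Finsupp.single (a+b+c-(i:ℤ)-(j:ℤ)) (A.mul (i+j-s) (A.mul s u v) w) = 0 := by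
      refine Finset.sum_eq_zero (fun i hi => Finset.sum_eq_zero (fun j _ => ?_))
      rw [Nat.choose_eq_zero_of_lt (Finset.mem_range.1 hi), Nat.cast_zero, mul_zero, zero_smul]
    rw [hz, zero_add]
  rw [hsplit]
  -- coefficient rewrite and reindex
  have hterm : ∀ d ∈ Finset.range (2*R - s), ∀ j ∈ Finset.range R,
      (zbinom a (s+d) * zbinom b j * (Nat.choose (s+d) s : ℂ)) •
        Finsupp.single (a+b+c-((s+d:ℕ):ℤ)-(j:ℤ)) (A.mul (s+d+j-s) (A.mul s u v) w)
      = zbinom a s • ((zbinom (a-(s:ℤ)) d * zbinom b j) •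
          Finsupp.single (a+b+c-(s:ℤ)-((d+j:ℕ):ℤ)) (A.mul (d+j) (A.mul s u v) w)) := by
    intro d _ j _
    rw [show s+d+j-s = d+j by omega,
        show a+b+c-((s+d:ℕ):ℤ)-(j:ℤ) = a+b+c-(s:ℤ)-((d+j:ℕ):ℤ) by push_cast; ring,
        smul_smul]
    congr 1
    have hsub := zbinom_subset a s d
    linear_combination (zbinom b j) * hsub
  calc ∑ d ∈ Finset.range (2*R - s), ∑ j ∈ Finset.range R,
        (zbinom a (s+d) * zbinom b j * (Nat.choose (s+d) s : ℂ)) •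
          Finsupp.single (a+b+c-((s+d:ℕ):ℤ)-(j:ℤ)) (A.mul (s+d+j-s) (A.mul s u v) w)
      = ∑ d ∈ Finset.range (2*R - s), ∑ j ∈ Finset.range R,
          zbinom a s • ((zbinom (a-(s:ℤ)) d * zbinom b j) •
            Finsupp.single (a+b+c-(s:ℤ)-((d+j:ℕ):ℤ)) (A.mul (d+j) (A.mul s u v) w)) := by
        exact Finset.sum_congr rfl (fun d hd => Finset.sum_congr rfl (fun j hj => hterm d hd j hj))
    _ = zbinom a s • ∑ d ∈ Finset.range (2*R - s), ∑ j ∈ Finset.range R,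
          ((zbinom (a-(s:ℤ)) d * zbinom b j) •
            Finsupp.single (a+b+c-(s:ℤ)-((d+j:ℕ):ℤ)) (A.mul (d+j) (A.mul s u v) w)) := by
        rw [Finset.smul_sum]
        exact Finset.sum_congr rfl (fun d _ => by rw [Finset.smul_sum])
    _ = zbinom a s • ∑ d ∈ Finset.range R, ∑ j ∈ Finset.range R,
          ((zbinom (a-(s:ℤ)) d * zbinom b j) •
            Finsupp.single (a+b+c-(s:ℤ)-((d+j:ℕ):ℤ)) (A.mul (d+j) (A.mul s u v) w)) := by
        congr 1
        refine (Finset.sum_subset (Finset.range_subset_range.2 (by omega)) (fun d _ hd => ?_)).symm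
        have hdR : R ≤ d := le_of_not_gt (fun h => hd (Finset.mem_range.2 h))
        refine Finset.sum_eq_zero (fun j _ => ?_)
        rw [h_uvw s (d+j) (by omega), Finsupp.single_zero, smul_zero]
    _ = zbinom a s • ∑ m ∈ Finset.range (2*R),
          (∑ d ∈ Finset.range (m+1), zbinom (a-(s:ℤ)) d * zbinom b (m-d)) •
            Finsupp.single (a+b+c-(s:ℤ)-(m:ℤ)) (A.mul m (A.mul s u v) w) := by
        congr 1
        exact diag_regroup (fun d j => zbinom (a-(s:ℤ)) d * zbinom b j)
            (fun m => Finsupp.single (a+b+c-(s:ℤ)-(m:ℤ)) (A.mul m (A.mul s u v) w)) R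
            (fun m hm => by rw [h_uvw s m hm, Finsupp.single_zero])
    _ = zbinom a s • ∑ m ∈ Finset.range (2*R), zbinom (a+b-(s:ℤ)) m •
          Finsupp.single (a+b+c-(s:ℤ)-(m:ℤ)) (A.mul m (A.mul s u v) w) := by
        congr 1
        refine Finset.sum_congr rfl (fun m _ => ?_)
        rw [zbinom_vandermonde (a-(s:ℤ)) b m, show a-(s:ℤ)+b = a+b-(s:ℤ) by ring]

def Dmap : (ℤ →₀ U) →ₗ[ℂ] (ℤ →₀ U) := Finsupp.mapRange.linearMap A.D

lemma Dmap_single (n : ℤ) (u : U) :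
    Dmap A (Finsupp.single n u) = Finsupp.single n (A.D u) := by
  simp [Dmap]

lemma Dder {B : (ℤ →₀ U) →ₗ[ℂ] (ℤ →₀ U) →ₗ[ℂ] (ℤ →₀ U)} (hB : BProp A B) :
    ∀ x y, Dmap A (B x y) = B (Dmap A x) y + B x (Dmap A y) := by
  have hss : ∀ (n p : ℤ) (u v : U), Dmap A (B (Finsupp.single n u) (Finsupp.single p v))
      = B (Dmap A (Finsupp.single n u)) (Finsupp.single p v)
        + B (Finsupp.single n u) (Dmap A (Finsupp.single p v)) := by
    intro n p u v
    set N := bnd A u v with hNdef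
    have huv : ∀ i, N ≤ i → A.mul i u v = 0 := fun i hi => bnd_spec A u v hi
    have huv' : ∀ i, N + 1 ≤ i → A.mul i u v = 0 := fun i hi => huv i (by omega)
    have hDu : ∀ i, N + 1 ≤ i → A.mul i (A.D u) v = 0 := by
      intro i hi
      obtain ⟨j, rfl⟩ : ∃ j, i = j + 1 := ⟨i - 1, by omega⟩
      rw [A.dLeft j u v, huv j (by omega), smul_zero]
    have hDv : ∀ i, N + 1 ≤ i → A.mul i u (A.D v) = 0 := by
      intro i hi
      have h1 : A.mul i u (A.D v) = A.D (A.mul i u v) - A.mul i (A.D u) v := by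
        rw [A.leibniz i u v]; abel
      rw [h1, huv' i hi, hDu i hi, map_zero, sub_zero]
    rw [Dmap_single, Dmap_single, Bsingle A hB n p u v huv', Bsingle A hB n p (A.D u) v hDu,
        Bsingle A hB n p u (A.D v) hDv, fsum, fsum, fsum, map_sum, ← Finset.sum_add_distrib]
    refine Finset.sum_congr rfl (fun i _ => ?_)
    rw [map_smul, Dmap_single A (n+p-(i:ℤ)) (A.mul i u v), A.leibniz i u v,
        Finsupp.single_add, smul_add]
  intro x y
  induction x using Finsupp.induction_linear with
  | zero => simp
  | add f g hf hg =>
    simp only [map_add, LinearMap.add_apply]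
    rw [hf, hg]; abel
  | single n u =>
    induction y using Finsupp.induction_linear with
    | zero => simp
    | add f g hf hg =>
      simp only [map_add]
      rw [hf, hg]; abel
    | single p v => exact hss n p u v

lemma Kleft {B : (ℤ →₀ U) →ₗ[ℂ] (ℤ →₀ U) →ₗ[ℂ] (ℤ →₀ U)} (hB : BProp A B) :
    ∀ x ∈ Ksub A, ∀ y, B x y ∈ Ksub A := by
  intro x hx
  refine Submodule.span_induction (p := fun x _ => ∀ y, B x y ∈ Ksub A) ?_ ?_ ?_ ?_ hx
  · rintro g ⟨u, n, rfl⟩ y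
    have hg : B (Finsupp.single n (A.D u) + (n:ℂ) • Finsupp.single (n-1) u) = 0 :=
      Finsupp.lhom_ext (fun p v => by rw [L1 A hB n p u v]; rfl)
    rw [hg, LinearMap.zero_apply]
    exact (Ksub A).zero_mem
  · intro y; rw [map_zero, LinearMap.zero_apply]; exact (Ksub A).zero_mem
  · intro x z _ _ ihx ihz y
    rw [map_add, LinearMap.add_apply]; exact add_mem (ihx y) (ihz y)
  · intro t x _ ih y
    rw [map_smul, LinearMap.smul_apply]; exact Submodule.smul_mem _ _ (ih y)

lemma Kright {B : (ℤ →₀ U) →ₗ[ℂ] (ℤ →₀ U) →ₗ[ℂ] (ℤ →₀ U)} (hB : BProp A B) :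
    ∀ y ∈ Ksub A, ∀ x, B x y ∈ Ksub A := by
  intro y hy
  refine Submodule.span_induction (p := fun y _ => ∀ x, B x y ∈ Ksub A) ?_ ?_ ?_ ?_ hy
  · rintro g ⟨v, p, rfl⟩ x
    have hmap : ((Ksub A).mkQ).comp
        (B.flip (Finsupp.single p (A.D v) + (p:ℂ) • Finsupp.single (p-1) v)) = 0 :=
      Finsupp.lhom_ext (fun n u => by
        simp only [LinearMap.comp_apply, LinearMap.flip_apply, LinearMap.zero_apply]
        exact L2 A hB n p u v)
    have h2 := LinearMap.congr_fun hmap x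
    simp only [LinearMap.comp_apply, LinearMap.flip_apply, LinearMap.zero_apply,
      Submodule.mkQ_apply] at h2
    rwa [Submodule.Quotient.mk_eq_zero] at h2
  · intro x; rw [map_zero]; exact (Ksub A).zero_mem
  · intro y z _ _ ihy ihz x
    rw [map_add]; exact add_mem (ihy x) (ihz x)
  · intro t y _ ih x
    rw [map_smul]; exact Submodule.smul_mem _ _ (ih x)

lemma Jfull {B : (ℤ →₀ U) →ₗ[ℂ] (ℤ →₀ U) →ₗ[ℂ] (ℤ →₀ U)} (hB : BProp A B) :
    ∀ x y z, B x (B y z) - B y (B x z) = B (B x y) z := by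
  intro x y z
  induction x using Finsupp.induction_linear with
  | zero => simp
  | add f g hf hg =>
    simp only [map_add, LinearMap.add_apply]
    rw [← hf, ← hg]; abel
  | single a u =>
    induction y using Finsupp.induction_linear with
    | zero => simp
    | add f g hf hg =>
      simp only [map_add, LinearMap.add_apply]
      rw [← hf, ← hg]; abel
    | single b v =>
      induction z using Finsupp.induction_linear with
      | zero => simp
      | add f g hf hg =>
        simp only [map_add]
        rw [← hf, ← hg]; abel
      | single c w => exact L4 A hB a b c u v w

/-- the bilinear map `B` on `M(U)` determined by
`B(uₙ, v_p) = Σ_{i≥0} binom(n,i)·(u_iv)_{n+p−i}` exists; it maps `K(U)` into `K(U)`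
in each variable, hence descends to `L(U) = M(U)/K(U)`, where the induced bracket
makes `L(U)` a Lie algebra; moreover `(Du)ₙ = −n·u_{n−1}` holds in `L(U)`, and
`uₙ ↦ (Du)ₙ` is a well-defined derivation of this Lie algebra. -/
theorem stmt1 (A : VertexLie U) :
    (∃ B : (ℤ →₀ U) →ₗ[ℂ] (ℤ →₀ U) →ₗ[ℂ] (ℤ →₀ U), BProp A B) ∧
    ∀ B : (ℤ →₀ U) →ₗ[ℂ] (ℤ →₀ U) →ₗ[ℂ] (ℤ →₀ U), BProp A B →
      (∀ x ∈ Ksub A, ∀ y : ℤ →₀ U, B x y ∈ Ksub A) ∧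
      (∀ x : ℤ →₀ U, ∀ y ∈ Ksub A, B x y ∈ Ksub A) ∧
      ∃ Bq : ((ℤ →₀ U) ⧸ Ksub A) →ₗ[ℂ] ((ℤ →₀ U) ⧸ Ksub A) →ₗ[ℂ] ((ℤ →₀ U) ⧸ Ksub A),
        (∀ x y : ℤ →₀ U, Bq ((Ksub A).mkQ x) ((Ksub A).mkQ y) = (Ksub A).mkQ (B x y)) ∧
        (∀ a, Bq a a = 0) ∧
        (∀ a b c, Bq a (Bq b c) - Bq b (Bq a c) = Bq (Bq a b) c) ∧
        (∀ (u : U) (n : ℤ),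
          (Ksub A).mkQ (Finsupp.single n (A.D u))
            = (-(n : ℂ)) • (Ksub A).mkQ (Finsupp.single (n - 1) u)) ∧
        ∃ Dq : ((ℤ →₀ U) ⧸ Ksub A) →ₗ[ℂ] ((ℤ →₀ U) ⧸ Ksub A),
          (∀ (u : U) (n : ℤ),
            Dq ((Ksub A).mkQ (Finsupp.single n u)) = (Ksub A).mkQ (Finsupp.single n (A.D u))) ∧
          (∀ a b, Dq (Bq a b) = Bq (Dq a) b + Bq a (Dq b)) := by
  refine ⟨⟨Bmap A, Bmap_prop A⟩, ?_⟩
  intro B hB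
  refine ⟨Kleft A hB, fun x y hy => Kright A hB y hy x, ?_⟩
  -- construct Bq
  set C : (ℤ →₀ U) →ₗ[ℂ] (ℤ →₀ U) →ₗ[ℂ] ((ℤ →₀ U) ⧸ Ksub A) := B.compr₂ (Ksub A).mkQ with hC
  have hflipker : Ksub A ≤ LinearMap.ker C.flip := by
    intro y hy
    rw [LinearMap.mem_ker]
    refine LinearMap.ext (fun x => ?_)
    simp only [LinearMap.flip_apply, LinearMap.zero_apply, hC, LinearMap.compr₂_apply,
      Submodule.mkQ_apply]
    rw [Submodule.Quotient.mk_eq_zero]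
    exact Kright A hB y hy x
  set D1 := (Ksub A).liftQ C.flip hflipker with hD1
  have hker2 : Ksub A ≤ LinearMap.ker D1.flip := by
    intro x hx
    rw [LinearMap.mem_ker]
    refine LinearMap.ext (fun z => ?_)
    obtain ⟨y, rfl⟩ := (Ksub A).mkQ_surjective z
    simp only [LinearMap.flip_apply, Submodule.mkQ_apply, hD1, Submodule.liftQ_apply,
      LinearMap.zero_apply, hC, LinearMap.compr₂_apply]
    rw [Submodule.Quotient.mk_eq_zero]
    exact Kleft A hB x hx y
  set Bq := (Ksub A).liftQ D1.flip hker2 with hBqdef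
  have hBq : ∀ x y, Bq ((Ksub A).mkQ x) ((Ksub A).mkQ y) = (Ksub A).mkQ (B x y) := by
    intro x y
    rw [hBqdef, Submodule.mkQ_apply, Submodule.liftQ_apply, LinearMap.flip_apply,
        Submodule.mkQ_apply, hD1, Submodule.liftQ_apply, LinearMap.flip_apply, hC,
        LinearMap.compr₂_apply, Submodule.mkQ_apply]
  -- antisymmetry
  have hanti0 : (B.compr₂ (Ksub A).mkQ) + (B.flip.compr₂ (Ksub A).mkQ) = 0 := by
    refine Finsupp.lhom_ext (fun n u => ?_)
    refine Finsupp.lhom_ext (fun p v => ?_)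
    simp only [LinearMap.add_apply, LinearMap.compr₂_apply, LinearMap.flip_apply,
      LinearMap.zero_apply, Submodule.mkQ_apply]
    have := L3 A hB n p u v
    simp only [Submodule.mkQ_apply] at this
    rw [this]
    exact neg_add_cancel _
  have hanti : ∀ x y, (Ksub A).mkQ (B x y) + (Ksub A).mkQ (B y x) = 0 := by
    intro x y
    have h := LinearMap.congr_fun (LinearMap.congr_fun hanti0 x) y
    simpa only [LinearMap.add_apply, LinearMap.compr₂_apply, LinearMap.flip_apply,
      LinearMap.zero_apply] using h
  have halt : ∀ a, Bq a a = 0 := by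
    intro a
    obtain ⟨x, rfl⟩ := (Ksub A).mkQ_surjective a
    have h1 : Bq ((Ksub A).mkQ x) ((Ksub A).mkQ x) + Bq ((Ksub A).mkQ x) ((Ksub A).mkQ x) = 0 := by
      rw [hBq]; exact hanti x x
    have h2 : (2:ℂ) • Bq ((Ksub A).mkQ x) ((Ksub A).mkQ x) = 0 := by
      rw [two_smul]; exact h1
    have h3 := congrArg (fun z => ((2:ℂ)⁻¹) • z) h2
    simpa [smul_smul] using h3
  -- Jacobi
  have hjq : ∀ a b c, Bq a (Bq b c) - Bq b (Bq a c) = Bq (Bq a b) c := by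
    intro a b c
    obtain ⟨x, rfl⟩ := (Ksub A).mkQ_surjective a
    obtain ⟨y, rfl⟩ := (Ksub A).mkQ_surjective b
    obtain ⟨z, rfl⟩ := (Ksub A).mkQ_surjective c
    rw [hBq, hBq, hBq, hBq, hBq, ← map_sub, Jfull A hB x y z]
    exact (hBq _ _).symm
  -- derivation
  have hDK : Ksub A ≤ Submodule.comap (Dmap A) (Ksub A) := by
    refine Submodule.span_le.2 ?_
    rintro g ⟨u, n, rfl⟩
    simp only [SetLike.mem_coe, Submodule.mem_comap, map_add, map_smul, Dmap_single]
    exact Submodule.subset_span ⟨A.D u, n, rfl⟩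
  set Dq := (Ksub A).mapQ (Ksub A) (Dmap A) hDK with hDqdef
  have hDq0 : ∀ x, Dq ((Ksub A).mkQ x) = (Ksub A).mkQ (Dmap A x) := by
    intro x
    rw [hDqdef, Submodule.mkQ_apply, Submodule.mapQ_apply, Submodule.mkQ_apply]
  refine ⟨Bq, hBq, halt, hjq, fun u n => mk_gen A u n, Dq, ?_, ?_⟩
  · intro u n
    rw [hDq0, Dmap_single]
  · intro a b
    obtain ⟨x, rfl⟩ := (Ksub A).mkQ_surjective a
    obtain ⟨y, rfl⟩ := (Ksub A).mkQ_surjective b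
    rw [hBq, hDq0, hDq0, hDq0, hBq, hBq, Dder A hB x y, map_add]


end
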